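/- Let m ≥ 1, let η ∈ ℝ^m, and let σ, Ψ, r ∈ ℝ satisfy σ² = Ψ² ‖η‖². Define the linear map s : ℝ^m × ℝ × ℝ → ℝ^m × ℝ × ℝ by s(u, a, b) = (Ψ r² a η, -Ψ ⟨η, u⟩ + r σ b, r σ a), where ⟨·,·⟩ is the standard inner product on ℝ^m. Then s is nilpotent; in fact s ∘ s ∘ s = 0. -/
import Mathlib


theorem stmt16 (m : ℕ) (hm : 1 ≤ m) (η : Fin m → ℝ) (σ Ψ r : ℝ)
    (htrap : σ ^ 2 = Ψ ^ 2 * ∑ i, η i ^ 2)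
    -- the zeroth order part `s` of the subprincipal operator at the trapped set
    (s : (Fin m → ℝ) × ℝ × ℝ → (Fin m → ℝ) × ℝ × ℝ)
    (hs : s = fun v =>
      (fun i => Ψ * r ^ 2 * v.2.1 * η i,
        -Ψ * (∑ i, η i * v.1 i) + r * σ * v.2.2,
        r * σ * v.2.1)) :
    ∀ v, s (s (s v)) = 0 := by
  subst hs
  rintro ⟨u, a, b⟩
  have key : ∀ c : ℝ, (∑ i, η i * (c * η i)) = c * ∑ i, η i ^ 2 := by
    intro c
    rw [Finset.mul_sum]
    exact Finset.sum_congr rfl fun i _ => by ring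
  have h2 : (-Ψ * (∑ i, η i * (Ψ * r ^ 2 * a * η i)) + r * σ * (r * σ * a)) = 0 := by
    rw [key]; linear_combination r ^ 2 * a * htrap
  simp only [Prod.mk.injEq, Prod.ext_iff]
  refine ⟨funext fun i => ?_, ?_, ?_⟩
  · show Ψ * r ^ 2 * _ * η i = 0
    rw [h2]; simp
  · show -Ψ * _ + r * σ * _ = 0
    rw [key]
    linear_combination (r ^ 2 * (-Ψ * (∑ i, η i * u i) + r * σ * b)) * htrap
  · show r * σ * _ = 0
    rw [h2]; simp
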